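/- Let N ≥ 10. There are no integers k₁, k₂, b with 0 ≤ k₁, 0 ≤ k₂, k₁ + k₂ = 6, and 4 ≤ b ≤ N−3 satisfying both −2N·k₁ ≡ b (mod 9N) and −2N·k₂ + b ≡ 6N (mod 9N). -/

import Mathlib

/-- for `N ≥ 10` there are no integers `k₁, k₂ ≥ 0` with
`k₁ + k₂ = 6` and `4 ≤ b ≤ N − 3` satisfying both
`−2N·k₁ ≡ b (mod 9N)` and `−2N·k₂ + b ≡ 6N (mod 9N)`. -/
theorem stmt6 (N k₁ k₂ b : ℤ) (hN : 10 ≤ N)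
    (hk₁ : 0 ≤ k₁) (hk₂ : 0 ≤ k₂) (hsum : k₁ + k₂ = 6)
    (hb₁ : 4 ≤ b) (hb₂ : b ≤ N - 3)
    (h₁ : -2 * N * k₁ ≡ b [ZMOD (9 * N)])
    (h₂ : -2 * N * k₂ + b ≡ 6 * N [ZMOD (9 * N)]) : False := by
  have hd : (9 * N : ℤ) ∣ b - (-2 * N * k₁) := h₁.dvd
  have hd2 : (N : ℤ) ∣ b + 2 * N * k₁ := by
    have h9 : (N : ℤ) ∣ 9 * N := ⟨9, by ring⟩
    have : (N : ℤ) ∣ b - (-2 * N * k₁) := dvd_trans h9 hd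
    convert this using 1; ring
  have hdb : (N : ℤ) ∣ b := by
    have h2k : (N : ℤ) ∣ 2 * N * k₁ := ⟨2 * k₁, by ring⟩
    have := hd2.sub h2k
    simpa using this
  have := Int.le_of_dvd (by linarith) hdb
  linarith
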